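/- Let m, n ≥ 3 be integers and let G_{m,n} be the subgroup of SL(2,ℝ) generated by A = [[1, 2cos(π/m) + 2cos(π/n)], [0, 1]] and B = [[2cos(π/m), 1], [−1, 0]]. If M ∈ G_{m,n} is parabolic and α ∈ ℝ is a fixed point of the Möbius action of M (i.e., M·α = α), then α lies in the subfield ℚ(cos(π/m), cos(π/n)) of ℝ. -/

import Mathlib

open Real Matrix

/-- A matrix in SL(2,ℝ) is parabolic if it is not ±I and has trace of absolute value 2. -/
def IsParabolicMat (M : Matrix (Fin 2) (Fin 2) ℝ) : Prop :=
  M ≠ 1 ∧ M ≠ -1 ∧ |Matrix.trace M| = 2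

/-- The Möbius action of `M` fixes the real number `z`. -/
def MoebiusFixes (M : Matrix (Fin 2) (Fin 2) ℝ) (z : ℝ) : Prop :=
  M 0 0 * z + M 0 1 = (M 1 0 * z + M 1 1) * z

theorem stmt6 (m n : ℕ) (hm : 3 ≤ m) (hn : 3 ≤ n)
    (A B : Matrix.SpecialLinearGroup (Fin 2) ℝ)
    (hA : (A : Matrix (Fin 2) (Fin 2) ℝ) =
      !![1, 2 * Real.cos (Real.pi / (m : ℝ)) + 2 * Real.cos (Real.pi / (n : ℝ)); 0, 1])
    (hB : (B : Matrix (Fin 2) (Fin 2) ℝ) =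
      !![2 * Real.cos (Real.pi / (m : ℝ)), 1; -1, 0])
    (M : Matrix.SpecialLinearGroup (Fin 2) ℝ)
    (hM : M ∈ Subgroup.closure ({A, B} : Set (Matrix.SpecialLinearGroup (Fin 2) ℝ)))
    (hpar : IsParabolicMat (M : Matrix (Fin 2) (Fin 2) ℝ))
    (α : ℝ) (hfix : MoebiusFixes (M : Matrix (Fin 2) (Fin 2) ℝ) α) :
    α ∈ Subfield.closure ({Real.cos (Real.pi / (m : ℝ)),
      Real.cos (Real.pi / (n : ℝ))} : Set ℝ) := by
  set K := Subfield.closure ({Real.cos (Real.pi / (m : ℝ)),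
      Real.cos (Real.pi / (n : ℝ))} : Set ℝ) with hKdef
  have htwo : (2 : ℝ) ∈ K := by
    have h := K.add_mem K.one_mem K.one_mem
    norm_num at h
    norm_num
  have hcm : Real.cos (Real.pi / (m : ℝ)) ∈ K :=
    Subfield.subset_closure (by left; rfl)
  have hcn : Real.cos (Real.pi / (n : ℝ)) ∈ K :=
    Subfield.subset_closure (by right; rfl)
  -- all entries of M lie in K
  have key : ∀ i j, (M : Matrix (Fin 2) (Fin 2) ℝ) i j ∈ K := by
    refine Subgroup.closure_induction
      (p := fun (g : Matrix.SpecialLinearGroup (Fin 2) ℝ) _ =>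
        ∀ i j, (g : Matrix (Fin 2) (Fin 2) ℝ) i j ∈ K) ?_ ?_ ?_ ?_ hM
    · rintro x (rfl | rfl) i j <;>
        fin_cases i <;> fin_cases j <;> simp [hA, hB] <;>
        first
          | exact K.one_mem
          | exact K.zero_mem
          | exact K.neg_mem K.one_mem
          | exact K.mul_mem (htwo) hcm
          | exact K.add_mem (K.mul_mem (htwo) hcm)
              (K.mul_mem (htwo) hcn)
    · intro i j
      fin_cases i <;> fin_cases j <;>
        simp [Matrix.one_apply] <;>
        first | exact K.one_mem | exact K.zero_mem
    · intro x y _ _ hx hy i j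
      have : ((x * y : Matrix.SpecialLinearGroup (Fin 2) ℝ) : Matrix (Fin 2) (Fin 2) ℝ) i j
          = (x : Matrix (Fin 2) (Fin 2) ℝ) i 0 * (y : Matrix (Fin 2) (Fin 2) ℝ) 0 j
          + (x : Matrix (Fin 2) (Fin 2) ℝ) i 1 * (y : Matrix (Fin 2) (Fin 2) ℝ) 1 j := by
        simp [Matrix.mul_apply, Fin.sum_univ_two]
      rw [this]
      exact K.add_mem (K.mul_mem (hx i 0) (hy 0 j)) (K.mul_mem (hx i 1) (hy 1 j))
    · intro x _ hx i j
      have hco : ((x⁻¹ : Matrix.SpecialLinearGroup (Fin 2) ℝ) : Matrix (Fin 2) (Fin 2) ℝ)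
          = Matrix.adjugate (x : Matrix (Fin 2) (Fin 2) ℝ) :=
        Matrix.SpecialLinearGroup.coe_inv x
      rw [hco, Matrix.adjugate_fin_two]
      fin_cases i <;> fin_cases j <;> simp <;>
        first
          | exact hx 0 0
          | exact hx 0 1
          | exact hx 1 0
          | exact hx 1 1
          | exact K.neg_mem (hx 0 1)
          | exact K.neg_mem (hx 1 0)
  set a := (M : Matrix (Fin 2) (Fin 2) ℝ) 0 0 with ha
  set b := (M : Matrix (Fin 2) (Fin 2) ℝ) 0 1 with hb
  set c := (M : Matrix (Fin 2) (Fin 2) ℝ) 1 0 with hc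
  set d := (M : Matrix (Fin 2) (Fin 2) ℝ) 1 1 with hd
  have hdet : a * d - b * c = 1 := by
    have := M.2
    rw [Matrix.det_fin_two] at this
    exact this
  have htr : (a + d) ^ 2 = 4 := by
    have h2 : |Matrix.trace (M : Matrix (Fin 2) (Fin 2) ℝ)| = 2 := hpar.2.2
    rw [Matrix.trace_fin_two] at h2
    have := sq_abs (a + d)
    rw [h2] at this
    nlinarith [this]
  have hfix' : a * α + b = (c * α + d) * α := hfix
  by_cases hc0 : c = 0
  · exfalso
    have had : a * d = 1 := by rw [hc0] at hdet; linarith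
    have had2 : (a - d) ^ 2 = 0 := by nlinarith
    have haeq : a = d := by nlinarith [sq_nonneg (a - d)]
    have hb0 : b = 0 := by
      rw [hc0, haeq] at hfix'
      nlinarith [hfix']
    have ha1 : a = 1 ∨ a = -1 := mul_self_eq_one_iff.1 (by nlinarith : a * a = 1)
    have heta : (M : Matrix (Fin 2) (Fin 2) ℝ) = !![a, b; c, d] :=
      Matrix.eta_fin_two _
    rw [hb0, hc0, ← haeq] at heta
    rcases ha1 with h1 | h1
    · apply hpar.1
      rw [heta, h1]
      ext i j
      fin_cases i <;> fin_cases j <;> simp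
    · apply hpar.2.1
      rw [heta, h1]
      ext i j
      fin_cases i <;> fin_cases j <;> simp
  · have hsq : (2 * c * α - (a - d)) ^ 2 = 0 := by linear_combination (-4*c) * hfix' + htr + (-4) * hdet
    have hlin : 2 * c * α - (a - d) = 0 := by
      nlinarith [sq_nonneg (2 * c * α - (a - d))]
    have hα : α = (a - d) / (2 * c) := by
      field_simp
      linear_combination hlin
    rw [hα]
    exact K.div_mem (K.sub_mem (key 0 0) (key 1 1))
      (K.mul_mem htwo (key 1 0))
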